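/- arXiv:2301.12906 — 2 statements merged into one kernel-verified Lean document; each statement's English description precedes it below -/
import Mathlib

section
/- If G' is obtained from a finite simple undirected graph G by deleting a single edge, then for any edge (i,j) that remains in G', the Forman–Ricci curvature F'(i,j) computed in G' satisfies F(i,j) - 2 ≤ F'(i,j) ≤ F(i,j) + 1. -/
open SimpleGraph Finset

def formanCurvature {V : Type*} [Fintype V] [DecidableEq V]
    (G : SimpleGraph V) [DecidableRel G.Adj] (i j : V) : ℤ :=
  4 - (G.degree i : ℤ) - (G.degree j : ℤ) +
    3 * ((G.neighborFinset i ∩ G.neighborFinset j).card : ℤ)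

lemma forman_symm {V : Type*} [Fintype V] [DecidableEq V]
    (G : SimpleGraph V) [DecidableRel G.Adj] (i j : V) :
    formanCurvature G i j = formanCurvature G j i := by
  simp [formanCurvature, Finset.inter_comm]
  ring

lemma nbr_other {V : Type*} [Fintype V] [DecidableEq V]
    (G G' : SimpleGraph V) [DecidableRel G.Adj] [DecidableRel G'.Adj]
    (istar jstar : V)
    (hdel : ∀ a b, G'.Adj a b ↔
      G.Adj a b ∧ ¬ ((a = istar ∧ b = jstar) ∨ (a = jstar ∧ b = istar)))
    (a : V) (ha : a ≠ istar) (hb : a ≠ jstar) :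
    G'.neighborFinset a = G.neighborFinset a := by
  ext x
  simp [mem_neighborFinset, hdel a x, ha, hb]

lemma nbr_istar {V : Type*} [Fintype V] [DecidableEq V]
    (G G' : SimpleGraph V) [DecidableRel G.Adj] [DecidableRel G'.Adj]
    (istar jstar : V) (hne : istar ≠ jstar)
    (hdel : ∀ a b, G'.Adj a b ↔
      G.Adj a b ∧ ¬ ((a = istar ∧ b = jstar) ∨ (a = jstar ∧ b = istar)))
    : G'.neighborFinset istar = (G.neighborFinset istar).erase jstar := by
  ext x
  simp only [Finset.mem_erase, mem_neighborFinset, hdel istar x, ne_eq]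
  have h' : ¬ istar = jstar := hne
  tauto

lemma aux_key {V : Type*} [Fintype V] [DecidableEq V]
    (G G' : SimpleGraph V) [DecidableRel G.Adj] [DecidableRel G'.Adj]
    (istar jstar : V) (hadj : G.Adj istar jstar)
    (hdel : ∀ a b, G'.Adj a b ↔
      G.Adj a b ∧ ¬ ((a = istar ∧ b = jstar) ∨ (a = jstar ∧ b = istar)))
    (j : V) (hj1 : j ≠ istar) (hj2 : j ≠ jstar) :
    formanCurvature G istar j - 2 ≤ formanCurvature G' istar j ∧
      formanCurvature G' istar j ≤ formanCurvature G istar j + 1 := by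
  have hni : G'.neighborFinset istar = (G.neighborFinset istar).erase jstar :=
    nbr_istar G G' istar jstar hadj.ne hdel
  have hnj : G'.neighborFinset j = G.neighborFinset j :=
    nbr_other G G' istar jstar hdel j hj1 hj2
  have hmem : jstar ∈ G.neighborFinset istar := (mem_neighborFinset G istar jstar).mpr hadj
  have hd1 : G'.degree istar + 1 = G.degree istar := by
    rw [← card_neighborFinset_eq_degree, ← card_neighborFinset_eq_degree, hni,
      Finset.card_erase_of_mem hmem]
    have := Finset.card_pos.mpr ⟨jstar, hmem⟩
    omega
  have hd2 : G'.degree j = G.degree j := by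
    rw [← card_neighborFinset_eq_degree, ← card_neighborFinset_eq_degree, hnj]
  have hint : G'.neighborFinset istar ∩ G'.neighborFinset j =
      (G.neighborFinset istar ∩ G.neighborFinset j).erase jstar := by
    rw [hni, hnj, Finset.erase_inter]
  set s := G.neighborFinset istar ∩ G.neighborFinset j with hs
  have hT : (G'.neighborFinset istar ∩ G'.neighborFinset j).card = s.card ∨
      (G'.neighborFinset istar ∩ G'.neighborFinset j).card + 1 = s.card := by
    rw [hint]
    by_cases h : jstar ∈ s
    · right; rw [Finset.card_erase_of_mem h]
      have := Finset.card_pos.mpr ⟨jstar, h⟩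
      omega
    · left; rw [Finset.erase_eq_of_notMem h]
  simp only [formanCurvature]
  rcases hT with h | h <;>
  · constructor <;> [nlinarith [hd1, hd2, h]; nlinarith [hd1, hd2, h]]

/-- Deleting a single edge changes the Forman–Ricci curvature of any
remaining edge by at least `-2` and at most `+1`. -/
theorem forman_stability_edge_deletion {V : Type*} [Fintype V] [DecidableEq V]
    (G G' : SimpleGraph V) [DecidableRel G.Adj] [DecidableRel G'.Adj]
    (istar jstar : V) (hadj : G.Adj istar jstar)
    (hdel : ∀ a b, G'.Adj a b ↔
      G.Adj a b ∧ ¬ ((a = istar ∧ b = jstar) ∨ (a = jstar ∧ b = istar)))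
    (i j : V) (hij : G'.Adj i j) :
    formanCurvature G i j - 2 ≤ formanCurvature G' i j ∧
      formanCurvature G' i j ≤ formanCurvature G i j + 1 := by
  have hdel' : ∀ a b, G'.Adj a b ↔
      G.Adj a b ∧ ¬ ((a = jstar ∧ b = istar) ∨ (a = istar ∧ b = jstar)) := by
    intro a b; rw [hdel a b]; tauto
  have hGij := ((hdel i j).mp hij).1
  have hnot := ((hdel i j).mp hij).2
  by_cases hii : i = istar
  · subst hii
    have hj2 : j ≠ jstar := fun h => hnot (Or.inl ⟨rfl, h⟩)
    exact aux_key G G' i jstar hadj hdel j hGij.ne' hj2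
  · by_cases hij2 : i = jstar
    · subst hij2
      have hj1 : j ≠ istar := fun h => hnot (Or.inr ⟨rfl, h⟩)
      exact aux_key G G' i istar hadj.symm hdel' j hGij.ne' hj1
    · by_cases hji : j = istar
      · subst hji
        rw [forman_symm G, forman_symm G']
        have hi2 : i ≠ jstar := hij2
        exact aux_key G G' j jstar hadj hdel i hGij.ne hi2
      · by_cases hjj : j = jstar
        · subst hjj
          rw [forman_symm G, forman_symm G']
          exact aux_key G G' j istar hadj.symm hdel' i hGij.ne hii
        · have h1 : G'.neighborFinset i = G.neighborFinset i :=
            nbr_other G G' istar jstar hdel i hii hij2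
          have h2 : G'.neighborFinset j = G.neighborFinset j :=
            nbr_other G G' istar jstar hdel j hji hjj
          have hd1 : G'.degree i = G.degree i := by
            rw [← card_neighborFinset_eq_degree, ← card_neighborFinset_eq_degree, h1]
          have hd2 : G'.degree j = G.degree j := by
            rw [← card_neighborFinset_eq_degree, ← card_neighborFinset_eq_degree, h2]
          simp [formanCurvature, h1, h2, hd1, hd2]
end

section
/- Let G be a finite connected unweighted graph with m edges and let C(i,j) denote the expected commute time of the simple random walk between vertices i and j. Then C(i,j) = 2m·R_{ij}, where R_{ij} is the effective resistance between i and j. -/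
open SimpleGraph Matrix Finset

/-- `B` is the Moore–Penrose pseudoinverse of `A`. -/
def IsMoorePenroseInverse {n : Type*} [Fintype n] [DecidableEq n]
    (A B : Matrix n n ℝ) : Prop :=
  A * B * A = A ∧ B * A * B = B ∧ (A * B)ᵀ = A * B ∧ (B * A)ᵀ = B * A

/-- Effective resistance `R_{ij} = (e_i - e_j)ᵀ Q† (e_i - e_j)`. -/
noncomputable def effRes {V : Type*} [Fintype V] [DecidableEq V]
    (Qd : Matrix V V ℝ) (i j : V) : ℝ :=
  (Pi.single i (1 : ℝ) - Pi.single j 1) ⬝ᵥ (Qd *ᵥ (Pi.single i (1 : ℝ) - Pi.single j 1))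

/-- `H i j` is the expected hitting time of the simple random walk on `G`
from `i` to `j`, characterised by the standard system of linear equations. -/
def IsHittingTime {V : Type*} [Fintype V] [DecidableEq V]
    (G : SimpleGraph V) [DecidableRel G.Adj] (H : V → V → ℝ) : Prop :=
  (∀ j, H j j = 0) ∧
    ∀ i j, i ≠ j → H i j = 1 + (∑ k ∈ G.neighborFinset i, H k j) / (G.degree i : ℝ)

/-- For a finite connected unweighted graph with `m` edges, the expected
commute time satisfies `C(i,j) = H(i,j) + H(j,i) = 2m · R_{ij}`. -/
theorem commuteTime_eq_two_m_effRes {V : Type*} [Fintype V] [DecidableEq V]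
    (G : SimpleGraph V) [DecidableRel G.Adj] (hconn : G.Connected)
    (H : V → V → ℝ) (hH : IsHittingTime G H)
    (Qd : Matrix V V ℝ) (hQd : IsMoorePenroseInverse (G.lapMatrix ℝ) Qd) :
    ∀ i j : V, H i j + H j i = 2 * (G.edgeFinset.card : ℝ) * effRes Qd i j := by

  classical
  intro i j
  set L : Matrix V V ℝ := G.lapMatrix ℝ with hLdef
  set m : ℝ := (G.edgeFinset.card : ℝ) with hmdef
  -- degrees are positive at vertices distinct from some other vertex
  have hdeg : ∀ v w : V, v ≠ w → 0 < G.degree v := by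
    intro v w hvw
    rw [G.degree_pos_iff_exists_adj]
    obtain ⟨p⟩ := hconn.preconnected v w
    cases p with
    | nil => exact absurd rfl hvw
    | cons h _ => exact ⟨_, h⟩
  have hsumdeg : ∑ v : V, (G.degree v : ℝ) = 2 * m := by
    rw [hmdef]
    norm_cast
    simpa using G.sum_degrees_eq_twice_card_edges
  -- key : L applied to the hitting-time vector
  have key : ∀ k : V, L *ᵥ (fun v => H v k) =
      fun v => (G.degree v : ℝ) - 2 * m * (if v = k then 1 else 0) := by
    intro k
    have hne : ∀ v, v ≠ k → (L *ᵥ (fun v => H v k)) v = (G.degree v : ℝ) := by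
      intro v hv
      rw [hLdef, lapMatrix_mulVec_apply]
      have hd : (0:ℝ) < (G.degree v : ℝ) := by exact_mod_cast hdeg v k hv
      rw [hH.2 v k hv]
      field_simp
      ring
    have hzero : ∑ v, (L *ᵥ (fun v => H v k)) v = 0 := by
      have h1 : (fun _ : V => (1:ℝ)) ᵥ* L = 0 := by
        have hsymm : Lᵀ = L := G.isSymm_lapMatrix ℝ
        rw [← hsymm, vecMul_transpose, hLdef, lapMatrix_mulVec_const_eq_zero]
      have h2 : (fun _ : V => (1:ℝ)) ⬝ᵥ (L *ᵥ (fun v => H v k)) = 0 := by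
        rw [dotProduct_mulVec, h1, zero_dotProduct]
      simpa [dotProduct] using h2
    have hj : (L *ᵥ (fun v => H v k)) k = (G.degree k : ℝ) - 2 * m := by
      have hsplit := Finset.add_sum_erase Finset.univ
        (fun v => (L *ᵥ (fun v => H v k)) v) (Finset.mem_univ k)
      have herase : ∑ v ∈ Finset.univ.erase k, (L *ᵥ (fun v => H v k)) v
          = ∑ v ∈ Finset.univ.erase k, (G.degree v : ℝ) :=
        Finset.sum_congr rfl fun v hv => hne v (Finset.ne_of_mem_erase hv)
      have hde : ∑ v ∈ Finset.univ.erase k, (G.degree v : ℝ)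
          = 2 * m - (G.degree k : ℝ) := by
        rw [Finset.sum_erase_eq_sub (Finset.mem_univ k), hsumdeg]
      rw [herase, hde, hzero] at hsplit
      linarith
    funext v
    by_cases hv : v = k
    · subst hv; simpa using hj
    · simpa [hv] using hne v hv
  -- kernel of L consists of constant vectors
  have hker : ∀ x : V → ℝ, L *ᵥ x = 0 → ∀ a b : V, x a = x b := by
    intro x hx a b
    have := (G.lapMatrix_mulVec_eq_zero_iff_forall_reachable (x := x)).mp
      (by exact hx)
    exact this a b (hconn.preconnected a b)
  -- representation of hitting-time differences
  have hrep : ∀ (x y k : V),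
      (Pi.single x (1:ℝ) - Pi.single y 1) ⬝ᵥ (Qd *ᵥ (L *ᵥ (fun v => H v k)))
        = H x k - H y k := by
    intro x y k
    set f : V → ℝ := fun v => H v k with hf
    have h0 : L *ᵥ (Qd *ᵥ (L *ᵥ f) - f) = 0 := by
      rw [mulVec_sub, mulVec_mulVec, mulVec_mulVec, hQd.1, sub_self]
    have hc := hker _ h0 x y
    have hc' : (Qd *ᵥ (L *ᵥ f)) x - f x = (Qd *ᵥ (L *ᵥ f)) y - f y := by
      simpa using hc
    have hdot : (Pi.single x (1:ℝ) - Pi.single y 1) ⬝ᵥ (Qd *ᵥ (L *ᵥ f))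
        = (Qd *ᵥ (L *ᵥ f)) x - (Qd *ᵥ (L *ᵥ f)) y := by
      rw [sub_dotProduct, single_dotProduct, single_dotProduct, one_mul, one_mul]
    rw [hdot]
    have : f x - f y = H x k - H y k := rfl
    linarith [hc']
  have hij : (Pi.single i (1:ℝ) - Pi.single j 1) ⬝ᵥ (Qd *ᵥ (L *ᵥ (fun v => H v j)))
      = H i j := by
    rw [hrep i j j, hH.1 j, sub_zero]
  have hji : (Pi.single i (1:ℝ) - Pi.single j 1) ⬝ᵥ (Qd *ᵥ (L *ᵥ (fun v => H v i)))
      = - H j i := by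
    rw [hrep i j i, hH.1 i, zero_sub]
  -- the difference of the two right-hand sides
  have hdiff : (L *ᵥ (fun v => H v j)) - (L *ᵥ (fun v => H v i))
      = (2 * m) • (Pi.single i (1:ℝ) - Pi.single j 1) := by
    rw [key i, key j]
    funext v
    have h1 : (Pi.single i (1:ℝ) : V → ℝ) v = if v = i then (1:ℝ) else (0:ℝ) := by simp [Pi.single_apply]
    have h2 : (Pi.single j (1:ℝ) : V → ℝ) v = if v = j then (1:ℝ) else (0:ℝ) := by simp [Pi.single_apply]
    simp only [Pi.sub_apply, Pi.smul_apply, smul_eq_mul, h1, h2]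
    by_cases hvi : v = i <;> by_cases hvj : v = j <;> simp [hvi, hvj] <;> split_ifs <;> ring
  have hfinal : H i j + H j i
      = (Pi.single i (1:ℝ) - Pi.single j 1) ⬝ᵥ
          (Qd *ᵥ ((2 * m) • (Pi.single i (1:ℝ) - Pi.single j 1))) := by
    rw [← hdiff, mulVec_sub, dotProduct_sub, hij, hji]
    ring
  rw [hfinal, mulVec_smul, dotProduct_smul, effRes]
  simp [smul_eq_mul]
end
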